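/- arXiv:1203.2569 — 8 statements merged into one kernel-verified Lean document; each statement's English description precedes it below -/
import Mathlib

section
/- If p, q, r ∈ [0,1] satisfy |p + q − 1| ≤ r ≤ 1 − |p − q|, then there exists a finite probability space (Ω, μ) and events A, B, C with μ(A) = μ(B) = μ(C) = 1/2 such that p = μ(A ∩ B)/μ(B), q = μ(B ∩ C)/μ(C), and r = μ(A ∩ C)/μ(C). -/
theorem stmt_1 (p q r : ℝ) (hp : p ∈ Set.Icc (0:ℝ) 1) (hq : q ∈ Set.Icc (0:ℝ) 1)
    (hr : r ∈ Set.Icc (0:ℝ) 1)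
    (h1 : |p + q - 1| ≤ r) (h2 : r ≤ 1 - |p - q|) :
    ∃ (n : ℕ) (w : Fin n → ℝ), (∀ i, 0 ≤ w i) ∧ (∑ i, w i) = 1 ∧
      ∃ A B C : Finset (Fin n),
        (∑ i ∈ A, w i) = 1/2 ∧ (∑ i ∈ B, w i) = 1/2 ∧ (∑ i ∈ C, w i) = 1/2 ∧
        p = (∑ i ∈ A ∩ B, w i) / (∑ i ∈ B, w i) ∧
        q = (∑ i ∈ B ∩ C, w i) / (∑ i ∈ C, w i) ∧
        r = (∑ i ∈ A ∩ C, w i) / (∑ i ∈ C, w i) := by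
  obtain ⟨hp0, hp1⟩ := hp
  obtain ⟨hq0, hq1⟩ := hq
  obtain ⟨hr0, hr1⟩ := hr
  rw [abs_le] at h1
  have h2' : |p - q| ≤ 1 - r := by linarith
  rw [abs_le] at h2'
  obtain ⟨h1a, h1b⟩ := h1
  obtain ⟨h2a, h2b⟩ := h2'
  set x : ℝ := max 0 (max ((p+q-1)/2) (max ((q+r-1)/2) ((p+r-1)/2))) with hx
  have hx0 : 0 ≤ x := le_max_left _ _
  have hx1 : (p+q-1)/2 ≤ x := le_trans (le_max_left _ _) (le_max_right _ _)
  have hx2 : (q+r-1)/2 ≤ x := le_trans (le_trans (le_max_left _ _) (le_max_right _ _)) (le_max_right _ _)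
  have hx3 : (p+r-1)/2 ≤ x := le_trans (le_trans (le_max_right _ _) (le_max_right _ _)) (le_max_right _ _)
  have hxup : x ≤ min (min (p/2) (min (q/2) (r/2))) ((p+q+r-1)/2) := by
    apply max_le
    · simp only [le_min_iff]
      refine ⟨⟨by linarith, by linarith, by linarith⟩, by linarith⟩
    · apply max_le
      · simp only [le_min_iff]
        refine ⟨⟨by linarith, by linarith, by linarith⟩, by linarith⟩
      · apply max_le
        · simp only [le_min_iff]
          refine ⟨⟨by linarith, by linarith, by linarith⟩, by linarith⟩
        · simp only [le_min_iff]
          refine ⟨⟨by linarith, by linarith, by linarith⟩, by linarith⟩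
  simp only [le_min_iff] at hxup
  obtain ⟨⟨hxp, hxq, hxr⟩, hxs⟩ := hxup
  have key : ∀ (a0 a1 a2 a3 a4 a5 a6 a7 : ℝ),
      (∀ S : Finset (Fin 8), ∑ i ∈ S, (![a0,a1,a2,a3,a4,a5,a6,a7] : Fin 8 → ℝ) i =
        ∑ i ∈ S, (![a0,a1,a2,a3,a4,a5,a6,a7] : Fin 8 → ℝ) i) := fun _ _ _ _ _ _ _ _ S => rfl
  clear key
  set w : Fin 8 → ℝ := ![x, p/2 - x, q/2 - x, r/2 - x, 1/2 - p/2 - r/2 + x,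
      1/2 - p/2 - q/2 + x, 1/2 - q/2 - r/2 + x, (p+q+r-1)/2 - x] with hw
  have w0 : w 0 = x := rfl
  have w1 : w 1 = p/2 - x := rfl
  have w2 : w 2 = q/2 - x := rfl
  have w3 : w 3 = r/2 - x := rfl
  have w4 : w 4 = 1/2 - p/2 - r/2 + x := rfl
  have w5 : w 5 = 1/2 - p/2 - q/2 + x := rfl
  have w6 : w 6 = 1/2 - q/2 - r/2 + x := rfl
  have w7 : w 7 = (p+q+r-1)/2 - x := rfl
  have sA : (∑ i ∈ ({0,1,3,4} : Finset (Fin 8)), w i) = 1/2 := by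
    rw [show ({0,1,3,4} : Finset (Fin 8)) = {0} ∪ {1} ∪ {3} ∪ {4} from by decide]
    rw [Finset.sum_union (by decide), Finset.sum_union (by decide), Finset.sum_union (by decide)]
    simp only [Finset.sum_singleton, w0, w1, w3, w4]; ring
  have sB : (∑ i ∈ ({0,1,2,5} : Finset (Fin 8)), w i) = 1/2 := by
    rw [show ({0,1,2,5} : Finset (Fin 8)) = {0} ∪ {1} ∪ {2} ∪ {5} from by decide]
    rw [Finset.sum_union (by decide), Finset.sum_union (by decide), Finset.sum_union (by decide)]
    simp only [Finset.sum_singleton, w0, w1, w2, w5]; ring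
  have sC : (∑ i ∈ ({0,2,3,6} : Finset (Fin 8)), w i) = 1/2 := by
    rw [show ({0,2,3,6} : Finset (Fin 8)) = {0} ∪ {2} ∪ {3} ∪ {6} from by decide]
    rw [Finset.sum_union (by decide), Finset.sum_union (by decide), Finset.sum_union (by decide)]
    simp only [Finset.sum_singleton, w0, w2, w3, w6]; ring
  have iAB : ({0,1,3,4} : Finset (Fin 8)) ∩ {0,1,2,5} = {0} ∪ {1} := by decide
  have iBC : ({0,1,2,5} : Finset (Fin 8)) ∩ {0,2,3,6} = {0} ∪ {2} := by decide
  have iAC : ({0,1,3,4} : Finset (Fin 8)) ∩ {0,2,3,6} = {0} ∪ {3} := by decide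
  refine ⟨8, w, ?_, ?_, ({0,1,3,4} : Finset (Fin 8)), ({0,1,2,5} : Finset (Fin 8)),
      ({0,2,3,6} : Finset (Fin 8)), sA, sB, sC, ?_, ?_, ?_⟩
  · intro i
    fin_cases i
    · show (0:ℝ) ≤ w 0; rw [w0]; linarith
    · show (0:ℝ) ≤ w 1; rw [w1]; linarith
    · show (0:ℝ) ≤ w 2; rw [w2]; linarith
    · show (0:ℝ) ≤ w 3; rw [w3]; linarith
    · show (0:ℝ) ≤ w 4; rw [w4]; linarith
    · show (0:ℝ) ≤ w 5; rw [w5]; linarith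
    · show (0:ℝ) ≤ w 6; rw [w6]; linarith
    · show (0:ℝ) ≤ w 7; rw [w7]; linarith
  · rw [Fin.sum_univ_eight, w0, w1, w2, w3, w4, w5, w6, w7]; ring
  · rw [iAB, sB, Finset.sum_union (by decide)]
    simp only [Finset.sum_singleton, w0, w1]; ring
  · rw [iBC, sC, Finset.sum_union (by decide)]
    simp only [Finset.sum_singleton, w0, w2]; ring
  · rw [iAC, sC, Finset.sum_union (by decide)]
    simp only [Finset.sum_singleton, w0, w3]; ring
end

section
/- If p, q, r ∈ [0,1] satisfy (√(pq) − √((1−p)(1−q)))² ≤ r ≤ (√(pq) + √((1−p)(1−q)))², then there exist unit vectors a, b, c in ℂ² such that p = |⟨a,b⟩|², q = |⟨b,c⟩|², and r = |⟨a,c⟩|². -/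
open scoped InnerProductSpace

set_option maxHeartbeats 1000000

theorem stmt_4 (p q r : ℝ) (hp : p ∈ Set.Icc (0:ℝ) 1) (hq : q ∈ Set.Icc (0:ℝ) 1)
    (hr : r ∈ Set.Icc (0:ℝ) 1)
    (h1 : (Real.sqrt (p * q) - Real.sqrt ((1 - p) * (1 - q))) ^ 2 ≤ r)
    (h2 : r ≤ (Real.sqrt (p * q) + Real.sqrt ((1 - p) * (1 - q))) ^ 2) :
    ∃ a b c : EuclideanSpace ℂ (Fin 2), ‖a‖ = 1 ∧ ‖b‖ = 1 ∧ ‖c‖ = 1 ∧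
      p = ‖⟪a, b⟫_ℂ‖ ^ 2 ∧ q = ‖⟪b, c⟫_ℂ‖ ^ 2 ∧ r = ‖⟪a, c⟫_ℂ‖ ^ 2 := by
  obtain ⟨hp0, hp1⟩ := hp
  obtain ⟨hq0, hq1⟩ := hq
  have hp1' : (0:ℝ) ≤ 1 - p := by linarith
  have hq1' : (0:ℝ) ≤ 1 - q := by linarith
  set A := Real.sqrt p * Real.sqrt q with hA
  set B := Real.sqrt (1-p) * Real.sqrt (1-q) with hB
  have hA0 : 0 ≤ A := mul_nonneg (Real.sqrt_nonneg _) (Real.sqrt_nonneg _)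
  have hB0 : 0 ≤ B := mul_nonneg (Real.sqrt_nonneg _) (Real.sqrt_nonneg _)
  have hA2 : A^2 = p*q := by rw [hA, mul_pow, Real.sq_sqrt hp0, Real.sq_sqrt hq0]
  have hB2 : B^2 = (1-p)*(1-q) := by rw [hB, mul_pow, Real.sq_sqrt hp1', Real.sq_sqrt hq1']
  rw [Real.sqrt_mul hp0, Real.sqrt_mul hp1'] at h1 h2
  have h1' : A^2 + B^2 - 2*(A*B) ≤ r := by nlinarith [h1]
  have h2' : r ≤ A^2 + B^2 + 2*(A*B) := by nlinarith [h2]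
  set t : ℝ := if A*B = 0 then 0 else (r - A^2 - B^2)/(2*(A*B)) with ht
  have hAB0 : 0 ≤ A*B := mul_nonneg hA0 hB0
  have ht1 : t^2 ≤ 1 := by
    rw [ht]
    split_ifs with h
    · norm_num
    · have hpos : 0 < A*B := lt_of_le_of_ne hAB0 (Ne.symm h)
      rw [div_pow, div_le_one (by positivity)]
      nlinarith
  have hkey : A^2 + B^2 + 2*(A*B)*t = r := by
    rw [ht]
    split_ifs with h
    · rw [h] at h1' h2'; linarith
    · field_simp; rw [mul_div_cancel_left₀ _ h]; ring
  set s := Real.sqrt (1 - t^2) with hs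
  have hs2 : s^2 = 1 - t^2 := Real.sq_sqrt (by linarith)
  set z : ℂ := (t : ℂ) + (s : ℂ) * Complex.I with hz
  refine ⟨(WithLp.equiv 2 _).symm ![(Real.sqrt p : ℂ), (Real.sqrt (1-p) : ℂ)],
          (WithLp.equiv 2 _).symm ![1, 0],
          (WithLp.equiv 2 _).symm ![(Real.sqrt q : ℂ), (Real.sqrt (1-q) : ℂ) * z], ?_, ?_, ?_, ?_, ?_, ?_⟩
  · rw [EuclideanSpace.norm_eq]
    simp [Fin.sum_univ_two, Complex.norm_real, abs_of_nonneg (Real.sqrt_nonneg _),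
      Real.sq_sqrt hp0, Real.sq_sqrt hp1']
  · rw [EuclideanSpace.norm_eq]
    simp [Fin.sum_univ_two]
  · have hzn : ‖z‖ = 1 := by
      rw [hz]
      rw [show (t:ℂ) + (s:ℂ)*Complex.I = Complex.mk t s by simp [Complex.ext_iff]]
      simp [Complex.norm_def, Complex.normSq_mk]
      nlinarith [hs2, ht1]
    have habs : ‖z‖ = 1 := hzn
    rw [EuclideanSpace.norm_eq]
    simp [Fin.sum_univ_two, Complex.norm_real, abs_of_nonneg (Real.sqrt_nonneg _), norm_mul,
      habs, Real.sq_sqrt hq0, Real.sq_sqrt hq1']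
  · simp [PiLp.inner_apply, Fin.sum_univ_two, Complex.norm_real,
      abs_of_nonneg (Real.sqrt_nonneg _), Real.sq_sqrt hp0]
  · simp [PiLp.inner_apply, Fin.sum_univ_two, Complex.norm_real,
      abs_of_nonneg (Real.sqrt_nonneg _), Real.sq_sqrt hq0]
  · rw [PiLp.inner_apply]
    simp only [WithLp.equiv_symm_apply, WithLp.ofLp_toLp, Fin.sum_univ_two, Matrix.cons_val_zero,
      Matrix.cons_val_one, Matrix.head_cons, Complex.conj_ofReal, starRingEnd_apply]
    have : (starRingEnd ℂ) (Real.sqrt p : ℂ) * (Real.sqrt q : ℂ) +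
        (starRingEnd ℂ) (Real.sqrt (1-p) : ℂ) * ((Real.sqrt (1-q) : ℂ) * z)
        = Complex.mk (A + B*t) (B*s) := by
      rw [Complex.conj_ofReal, Complex.conj_ofReal, hz]
      simp [Complex.ext_iff, hA, hB]
      constructor <;> ring
    rw [show (⟪(Real.sqrt p : ℂ), (Real.sqrt q : ℂ)⟫_ℂ + ⟪(Real.sqrt (1-p) : ℂ), (Real.sqrt (1-q) : ℂ) * z⟫_ℂ)
        = Complex.mk (A + B*t) (B*s) by
      simp only [Complex.conj_ofReal] at this; simp [RCLike.inner_apply]; linear_combination this]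
    rw [Complex.sq_norm, Complex.normSq_mk]
    linear_combination (-1 : ℝ) * hkey - B^2 * hs2
end

section
/- If p, q, r ∈ [0,1] and there exist unit vectors a, b, c in ℝ² with p = ⟨a,b⟩², q = ⟨b,c⟩², r = ⟨a,c⟩², then r = (√(pq) − √((1−p)(1−q)))² or r = (√(pq) + √((1−p)(1−q)))². -/
open scoped InnerProductSpace

theorem stmt_5 (p q r : ℝ) (hp : p ∈ Set.Icc (0:ℝ) 1) (hq : q ∈ Set.Icc (0:ℝ) 1)
    (hr : r ∈ Set.Icc (0:ℝ) 1)
    (a b c : EuclideanSpace ℝ (Fin 2)) (ha : ‖a‖ = 1) (hb : ‖b‖ = 1) (hc : ‖c‖ = 1)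
    (hpab : p = ⟪a, b⟫_ℝ ^ 2) (hqbc : q = ⟪b, c⟫_ℝ ^ 2) (hrac : r = ⟪a, c⟫_ℝ ^ 2) :
    r = (Real.sqrt (p * q) - Real.sqrt ((1 - p) * (1 - q))) ^ 2 ∨
    r = (Real.sqrt (p * q) + Real.sqrt ((1 - p) * (1 - q))) ^ 2 := by
  have hinner : ∀ x y : EuclideanSpace ℝ (Fin 2), ⟪x, y⟫_ℝ = x 0 * y 0 + x 1 * y 1 := by
    intro x y
    simp [PiLp.inner_apply, Fin.sum_univ_two, RCLike.inner_apply, conj_trivial]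
    ring
  have hnorm : ∀ x : EuclideanSpace ℝ (Fin 2), ‖x‖ = 1 → x 0 * x 0 + x 1 * x 1 = 1 := by
    intro x hx
    have h1 : ⟪x, x⟫_ℝ = ‖x‖ ^ 2 := real_inner_self_eq_norm_sq x
    rw [hinner] at h1
    rw [hx] at h1
    linarith
  have hna := hnorm a ha
  have hnb := hnorm b hb
  have hnc := hnorm c hc
  set a0 := a 0; set a1 := a 1
  set b0 := b 0; set b1 := b 1
  set c0 := c 0; set c1 := c 1
  set x := a0 * b0 + a1 * b1 with hx
  set y := b0 * c0 + b1 * c1 with hy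
  set u := a0 * b1 - a1 * b0 with hu
  set v := b1 * c0 - b0 * c1 with hv
  have hxu : x ^ 2 + u ^ 2 = 1 := by
    have : x ^ 2 + u ^ 2 = (a0 * a0 + a1 * a1) * (b0 * b0 + b1 * b1) := by ring
    rw [this, hna, hnb]; ring
  have hyv : y ^ 2 + v ^ 2 = 1 := by
    have : y ^ 2 + v ^ 2 = (b0 * b0 + b1 * b1) * (c0 * c0 + c1 * c1) := by ring
    rw [this, hnb, hnc]; ring
  have hac : ⟪a, c⟫_ℝ = x * y + u * v := by
    rw [hinner]
    have : (a0 * c0 + a1 * c1) * (b0 * b0 + b1 * b1) = x * y + u * v := by ring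
    rw [hnb] at this; linarith
  have hp' : p = x ^ 2 := by rw [hpab, hinner a b]
  have hq' : q = y ^ 2 := by rw [hqbc, hinner b c]
  have hr' : r = (x * y + u * v) ^ 2 := by rw [hrac, hac]
  have hpq : Real.sqrt (p * q) = |x * y| := by
    rw [hp', hq']
    rw [show x ^ 2 * y ^ 2 = (x * y) ^ 2 by ring, Real.sqrt_sq_eq_abs]
  have hQ : Real.sqrt ((1 - p) * (1 - q)) = |u * v| := by
    have h1 : 1 - p = u ^ 2 := by rw [hp']; linarith
    have h2 : 1 - q = v ^ 2 := by rw [hq']; linarith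
    rw [h1, h2, show u ^ 2 * v ^ 2 = (u * v) ^ 2 by ring, Real.sqrt_sq_eq_abs]
  rw [hpq, hQ, hr']
  set s := x * y
  set t := u * v
  rcases le_or_gt 0 (s * t) with h | h
  · right
    have habs : |s| * |t| = s * t := by rw [← abs_mul, abs_of_nonneg h]
    have h1 : (|s| + |t|) ^ 2 = s ^ 2 + 2 * |s| * |t| + t ^ 2 := by
      rw [add_sq, sq_abs, sq_abs]
    rw [h1, mul_assoc, habs]; ring
  · left
    have habs : |s| * |t| = -(s * t) := by rw [← abs_mul, abs_of_neg h]
    have h1 : (|s| - |t|) ^ 2 = s ^ 2 - 2 * |s| * |t| + t ^ 2 := by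
      rw [sub_sq, sq_abs, sq_abs]
    rw [h1, mul_assoc, habs]; ring
end

section
/- If p, q, r ∈ [0,1] satisfy |p + q − 1| ≤ r ≤ 1 − |p − q|, then they also satisfy (√(pq) − √((1−p)(1−q)))² ≤ r ≤ (√(pq) + √((1−p)(1−q)))². -/
theorem stmt_6 (p q r : ℝ) (hp : p ∈ Set.Icc (0:ℝ) 1) (hq : q ∈ Set.Icc (0:ℝ) 1)
    (hr : r ∈ Set.Icc (0:ℝ) 1)
    (h1 : |p + q - 1| ≤ r) (h2 : r ≤ 1 - |p - q|) :
    (Real.sqrt (p * q) - Real.sqrt ((1 - p) * (1 - q))) ^ 2 ≤ r ∧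
    r ≤ (Real.sqrt (p * q) + Real.sqrt ((1 - p) * (1 - q))) ^ 2 := by
  obtain ⟨hp0, hp1⟩ := hp
  obtain ⟨hq0, hq1⟩ := hq
  set a := Real.sqrt (p * q) with hadef
  set b := Real.sqrt ((1 - p) * (1 - q)) with hbdef
  have ha0 : 0 ≤ a := Real.sqrt_nonneg _
  have hb0 : 0 ≤ b := Real.sqrt_nonneg _
  have ha : a ^ 2 = p * q := by
    rw [hadef, sq, Real.mul_self_sqrt (by nlinarith)]
  have hb : b ^ 2 = (1 - p) * (1 - q) := by
    rw [hbdef, sq, Real.mul_self_sqrt (by nlinarith)]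
  have h1' := abs_le.mp h1
  have habs : |p - q| ≤ 1 - r := by linarith
  have h2' := abs_le.mp habs
  constructor
  · rcases le_total b a with hab | hab
    · nlinarith [sq_nonneg (a - b), mul_nonneg ha0 hb0]
    · nlinarith [sq_nonneg (a - b), mul_nonneg ha0 hb0]
  · have hab2 : (a * b) ^ 2 = p * q * ((1 - p) * (1 - q)) := by
      rw [mul_pow, ha, hb]
    rcases le_total q p with hpq | hpq
    · have key : q * (1 - p) ≤ a * b := by
        nlinarith [mul_nonneg ha0 hb0, mul_nonneg hq0 (by linarith : (0:ℝ) ≤ 1 - p),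
          mul_nonneg (mul_nonneg hq0 (by linarith : (0:ℝ) ≤ 1 - p)) (by linarith : (0:ℝ) ≤ p - q)]
      nlinarith [key]
    · have key : p * (1 - q) ≤ a * b := by
        nlinarith [mul_nonneg ha0 hb0, mul_nonneg hp0 (by linarith : (0:ℝ) ≤ 1 - q),
          mul_nonneg (mul_nonneg hp0 (by linarith : (0:ℝ) ≤ 1 - q)) (by linarith : (0:ℝ) ≤ q - p)]
      nlinarith [key]
end

section
/- For any p, q ∈ [0,1], the inequalities (√(pq) − √((1−p)(1−q)))² ≤ |p + q − 1| and 1 − |p − q| ≤ (√(pq) + √((1−p)(1−q)))² hold. -/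
theorem stmt_8 (p q : ℝ) (hp : p ∈ Set.Icc (0:ℝ) 1) (hq : q ∈ Set.Icc (0:ℝ) 1) :
    (Real.sqrt (p * q) - Real.sqrt ((1 - p) * (1 - q))) ^ 2 ≤ |p + q - 1| ∧
    1 - |p - q| ≤ (Real.sqrt (p * q) + Real.sqrt ((1 - p) * (1 - q))) ^ 2 := by
  obtain ⟨hp0, hp1⟩ := hp
  obtain ⟨hq0, hq1⟩ := hq
  set a := Real.sqrt (p * q) with ha
  set b := Real.sqrt ((1 - p) * (1 - q)) with hb
  have ha0 : 0 ≤ a := Real.sqrt_nonneg _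
  have hb0 : 0 ≤ b := Real.sqrt_nonneg _
  have ha2 : a ^ 2 = p * q := by
    rw [ha, sq, Real.mul_self_sqrt (by nlinarith)]
  have hb2 : b ^ 2 = (1 - p) * (1 - q) := by
    rw [hb, sq, Real.mul_self_sqrt (by nlinarith)]
  have habs : |p + q - 1| ^ 2 = (p + q - 1) ^ 2 := sq_abs _
  have habs0 : 0 ≤ |p + q - 1| := abs_nonneg _
  constructor
  · -- (a-b)^2 * (a+b)^2 = (p+q-1)^2, and (a-b)^2 ≤ (a+b)^2
    have key : ((a - b) ^ 2) ^ 2 ≤ |p + q - 1| ^ 2 := by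
      have h1 : (a ^ 2 - b ^ 2) ^ 2 = (p + q - 1) ^ 2 := by rw [ha2, hb2]; ring
      nlinarith [sq_nonneg (a - b), sq_nonneg (a + b), mul_nonneg ha0 hb0]
    nlinarith [sq_nonneg (a - b)]
  · rcases abs_cases (p - q) with ⟨h, hpq⟩ | ⟨h, hpq⟩
    · rw [h]
      have hab : q * (1 - p) ≤ a * b := by
        have : (q * (1 - p)) ^ 2 ≤ (a * b) ^ 2 := by
          rw [mul_pow a b 2, ha2, hb2]
          nlinarith [mul_nonneg (mul_nonneg hq0 (by linarith : (0:ℝ) ≤ 1 - p)) hpq]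
        nlinarith [mul_nonneg ha0 hb0, mul_nonneg hq0 (by linarith : (0:ℝ) ≤ 1 - p)]
      nlinarith
    · rw [h]
      have hab : p * (1 - q) ≤ a * b := by
        have : (p * (1 - q)) ^ 2 ≤ (a * b) ^ 2 := by
          rw [mul_pow a b 2, ha2, hb2]
          nlinarith [mul_nonneg (mul_nonneg hp0 (by linarith : (0:ℝ) ≤ 1 - q)) (by linarith : (0:ℝ) ≤ q - p)]
        nlinarith [mul_nonneg ha0 hb0, mul_nonneg hp0 (by linarith : (0:ℝ) ≤ 1 - q)]
      nlinarith
end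

section
/- Let p: Fin 3 → ℝ and p₂: Fin 3 → Fin 3 → ℝ be candidate single and pairwise probabilities with n = 2 events A₁, A₂ (taking indices 1,2 and pair (1,2)). There exist a finite probability space and events A₁, A₂ with μ(Aᵢ) = p(i) and μ(A₁ ∩ A₂) = p(1,2) if and only if 0 ≤ p(1,2) ≤ p(1) ≤ 1, 0 ≤ p(1,2) ≤ p(2) ≤ 1, and 0 ≤ p(1) + p(2) − p(1,2) ≤ 1. -/
theorem stmt_15 (p1 p2 p12 : ℝ) :
    (∃ (n : ℕ) (w : Fin n → ℝ), (∀ i, 0 ≤ w i) ∧ (∑ i, w i) = 1 ∧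
      ∃ A1 A2 : Finset (Fin n),
        (∑ i ∈ A1, w i) = p1 ∧ (∑ i ∈ A2, w i) = p2 ∧ (∑ i ∈ A1 ∩ A2, w i) = p12) ↔
    (0 ≤ p12 ∧ p12 ≤ p1 ∧ p1 ≤ 1 ∧ p12 ≤ p2 ∧ p2 ≤ 1 ∧
     0 ≤ p1 + p2 - p12 ∧ p1 + p2 - p12 ≤ 1) := by
  constructor
  · rintro ⟨n, w, hw, hsum, A1, A2, h1, h2, h12⟩
    have hU : ∑ i ∈ A1 ∪ A2, w i + ∑ i ∈ A1 ∩ A2, w i = p1 + p2 := by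
      rw [Finset.sum_union_inter, h1, h2]
    have hUn : 0 ≤ ∑ i ∈ A1 ∪ A2, w i := Finset.sum_nonneg fun i _ => hw i
    have hU1 : ∑ i ∈ A1 ∪ A2, w i ≤ 1 := by
      rw [← hsum]
      exact Finset.sum_le_sum_of_subset_of_nonneg (Finset.subset_univ _)
        fun i _ _ => hw i
    refine ⟨h12 ▸ Finset.sum_nonneg fun i _ => hw i, ?_, ?_, ?_, ?_, ?_, ?_⟩
    · rw [← h12, ← h1]
      exact Finset.sum_le_sum_of_subset_of_nonneg Finset.inter_subset_left
        fun i _ _ => hw i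
    · rw [← h1, ← hsum]
      exact Finset.sum_le_sum_of_subset_of_nonneg (Finset.subset_univ _)
        fun i _ _ => hw i
    · rw [← h12, ← h2]
      exact Finset.sum_le_sum_of_subset_of_nonneg Finset.inter_subset_right
        fun i _ _ => hw i
    · rw [← h2, ← hsum]
      exact Finset.sum_le_sum_of_subset_of_nonneg (Finset.subset_univ _)
        fun i _ _ => hw i
    · linarith
    · linarith
  · rintro ⟨h0, h1, h2, h3, h4, h5, h6⟩
    refine ⟨4, ![p12, p1 - p12, p2 - p12, 1 - (p1 + p2 - p12)], ?_, ?_,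
      {0, 1}, {0, 2}, ?_, ?_, ?_⟩
    · intro i
      fin_cases i <;> simp <;> linarith
    · simp [Fin.sum_univ_four]; ring
    · rw [show ({0, 1} : Finset (Fin 4)) = {0, 1} from rfl]
      rw [Finset.sum_insert (by decide), Finset.sum_singleton]
      simp
    · rw [Finset.sum_insert (by decide), Finset.sum_singleton]
      simp
    · rw [show ({0, 1} : Finset (Fin 4)) ∩ {0, 2} = {0} from by decide]
      simp
end

section
/- If (p(1), p(2), p(3), p(1,2), p(1,3), p(2,3)) are the measures μ(Aᵢ) and μ(Aᵢ ∩ Aⱼ) of three events in a probability space, then p(1) − p(1,2) − p(1,3) + p(2,3) ≥ 0 (and symmetrically for the other two cyclic versions). -/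
open MeasureTheory

lemma bell_aux {Ω : Type*} [MeasurableSpace Ω] (μ : Measure Ω) [IsProbabilityMeasure μ]
    (A B C : Set Ω) (hAC : MeasurableSet (A ∩ C)) :
    (μ A).toReal - (μ (A ∩ B)).toReal - (μ (A ∩ C)).toReal + (μ (B ∩ C)).toReal ≥ 0 := by
  have e : μ ((A ∩ B) ∪ (A ∩ C)) + μ ((A ∩ B) ∩ (A ∩ C)) = μ (A ∩ B) + μ (A ∩ C) :=
    measure_union_add_inter _ hAC
  have hu : μ ((A ∩ B) ∪ (A ∩ C)) ≤ μ A := by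
    apply measure_mono; intro x hx; rcases hx with h | h <;> exact h.1
  have hi : μ ((A ∩ B) ∩ (A ∩ C)) ≤ μ (B ∩ C) := by
    apply measure_mono; intro x hx; exact ⟨hx.1.2, hx.2.2⟩
  have hsum : μ (A ∩ B) + μ (A ∩ C) ≤ μ A + μ (B ∩ C) := by
    rw [← e]; exact add_le_add hu hi
  have hr : (μ (A ∩ B)).toReal + (μ (A ∩ C)).toReal ≤ (μ A).toReal + (μ (B ∩ C)).toReal := by
    rw [← ENNReal.toReal_add (measure_ne_top μ _) (measure_ne_top μ _),
        ← ENNReal.toReal_add (measure_ne_top μ _) (measure_ne_top μ _)]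
    exact ENNReal.toReal_mono (by finiteness) hsum
  linarith

theorem stmt_16 {Ω : Type*} [MeasurableSpace Ω] (μ : Measure Ω) [IsProbabilityMeasure μ]
    (A1 A2 A3 : Set Ω) (h1 : MeasurableSet A1) (h2 : MeasurableSet A2) (h3 : MeasurableSet A3) :
    (μ A1).toReal - (μ (A1 ∩ A2)).toReal - (μ (A1 ∩ A3)).toReal + (μ (A2 ∩ A3)).toReal ≥ 0 ∧
    (μ A2).toReal - (μ (A1 ∩ A2)).toReal - (μ (A2 ∩ A3)).toReal + (μ (A1 ∩ A3)).toReal ≥ 0 ∧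
    (μ A3).toReal - (μ (A1 ∩ A3)).toReal - (μ (A2 ∩ A3)).toReal + (μ (A1 ∩ A2)).toReal ≥ 0 := by
  refine ⟨bell_aux μ A1 A2 A3 (h1.inter h3), ?_, ?_⟩
  · have := bell_aux μ A2 A1 A3 (h2.inter h3)
    rwa [Set.inter_comm A2 A1] at this
  · have := bell_aux μ A3 A1 A2 (h3.inter h2)
    rwa [Set.inter_comm A3 A1, Set.inter_comm A3 A2] at this
end

section
/- A correlation vector p of single-event probabilities p(i) and pairwise probabilities p(i,j) for n events is realizable in a single finite probability space (i.e., there exist Ω, μ, and events A₁,…,Aₙ with μ(Aᵢ) = p(i), μ(Aᵢ ∩ Aⱼ) = p(i,j)) if and only if p is a convex combination of the 2ⁿ vertex correlation vectors p_b, b ∈ {0,1}ⁿ, where p_b(i) = bᵢ and p_b(i,j) = bᵢ·bⱼ. -/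
theorem stmt_18 (n : ℕ) (p1 : Fin n → ℝ) (p2 : Fin n → Fin n → ℝ) :
    (∃ (m : ℕ) (w : Fin m → ℝ), (∀ x, 0 ≤ w x) ∧ (∑ x, w x) = 1 ∧
      ∃ A : Fin n → Finset (Fin m),
        (∀ i, (∑ x ∈ A i, w x) = p1 i) ∧
        (∀ i j, i < j → (∑ x ∈ A i ∩ A j, w x) = p2 i j)) ↔
    (∃ lam : (Fin n → Bool) → ℝ, (∀ b, 0 ≤ lam b) ∧ (∑ b, lam b) = 1 ∧
      (∀ i, p1 i = ∑ b, lam b * (if b i then 1 else 0)) ∧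
      (∀ i j, i < j →
        p2 i j = ∑ b, lam b * (if b i then 1 else 0) * (if b j then 1 else 0))) := by
  classical
  constructor
  · rintro ⟨m, w, hw, hw1, A, hA1, hA2⟩
    set f : Fin m → (Fin n → Bool) := fun x i => decide (x ∈ A i) with hf
    refine ⟨fun b => ∑ x ∈ Finset.univ.filter (fun x => f x = b), w x, ?_, ?_, ?_, ?_⟩
    · intro b; exact Finset.sum_nonneg fun x _ => hw x
    · rw [← hw1]
      exact Finset.sum_fiberwise_of_maps_to (fun x _ => Finset.mem_univ _) w
    · intro i
      have key : ∀ g : (Fin n → Bool) → ℝ,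
          (∑ b, (∑ x ∈ Finset.univ.filter (fun x => f x = b), w x) * g b)
            = ∑ x, w x * g (f x) := by
        intro g
        rw [← Finset.sum_fiberwise_of_maps_to (fun x _ => Finset.mem_univ (f x))
          (fun x => w x * g (f x))]
        refine Finset.sum_congr rfl fun b _ => ?_
        rw [Finset.sum_mul]
        refine Finset.sum_congr rfl fun x hx => ?_
        rw [(Finset.mem_filter.1 hx).2]
      rw [key (fun b => if b i then 1 else 0), ← hA1 i]
      have : ∀ x : Fin m, w x * (if f x i then 1 else 0)
          = if x ∈ A i then w x else 0 := by
        intro x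
        by_cases h : x ∈ A i <;> simp [hf, h]
      rw [Finset.sum_congr rfl fun x _ => this x, Finset.sum_ite_mem,
        Finset.univ_inter]
    · intro i j hij
      have key : ∀ g : (Fin n → Bool) → ℝ,
          (∑ b, (∑ x ∈ Finset.univ.filter (fun x => f x = b), w x) * g b)
            = ∑ x, w x * g (f x) := by
        intro g
        rw [← Finset.sum_fiberwise_of_maps_to (fun x _ => Finset.mem_univ (f x))
          (fun x => w x * g (f x))]
        refine Finset.sum_congr rfl fun b _ => ?_
        rw [Finset.sum_mul]
        refine Finset.sum_congr rfl fun x hx => ?_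
        rw [(Finset.mem_filter.1 hx).2]
      have := key (fun b => (if b i then 1 else 0) * (if b j then 1 else 0))
      simp only [← mul_assoc] at this
      rw [this, ← hA2 i j hij]
      have h2 : ∀ x : Fin m, w x * (if f x i then 1 else 0) * (if f x j then 1 else 0)
          = if x ∈ A i ∩ A j then w x else 0 := by
        intro x
        by_cases h : x ∈ A i <;> by_cases h' : x ∈ A j <;>
          simp [hf, h, h', Finset.mem_inter]
      rw [Finset.sum_congr rfl fun x _ => h2 x, Finset.sum_ite_mem,
        Finset.univ_inter]
  · rintro ⟨lam, hlam, hlam1, h1, h2⟩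
    let e := Fintype.equivFin (Fin n → Bool)
    refine ⟨Fintype.card (Fin n → Bool), fun x => lam (e.symm x),
      fun x => hlam _, ?_, fun i => Finset.univ.filter (fun x => e.symm x i), ?_, ?_⟩
    · rw [Equiv.sum_comp e.symm lam, hlam1]
    · intro i
      rw [h1 i, ← Equiv.sum_comp e.symm (fun b => lam b * (if b i then 1 else 0))]
      rw [Finset.sum_filter]
      refine Finset.sum_congr rfl fun x _ => ?_
      by_cases h : e.symm x i <;> simp [h]
    · intro i j hij
      rw [h2 i j hij, ← Equiv.sum_comp e.symm
        (fun b => lam b * (if b i then 1 else 0) * (if b j then 1 else 0))]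
      have : Finset.univ.filter (fun x => e.symm x i = true) ∩
          Finset.univ.filter (fun x => e.symm x j = true)
          = Finset.univ.filter (fun x => e.symm x i = true ∧ e.symm x j = true) := by
        ext x; simp [Finset.mem_inter, and_assoc]
      rw [this, Finset.sum_filter]
      refine Finset.sum_congr rfl fun x _ => ?_
      by_cases h : e.symm x i <;> by_cases h' : e.symm x j <;> simp [h, h']
end
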